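/- Let X, Y be partially ordered complete metric spaces and F : X × Y → X, G : Y × X → Y continuous with the mixed monotone property. Suppose there exist nonnegative k, l with k + l < 1 such that d_X(F(x,y),F(u,v)) ≤ k·d_X(x,u) + l·d_Y(y,v) whenever x ≥₁ u, y ≤₂ v, and d_Y(G(y,x),G(v,u)) ≤ k·d_Y(y,v) + l·d_X(x,u) whenever x ≤₁ u, y ≥₂ v. If there exists (x₀,y₀) with x₀ ≤₁ F(x₀,y₀) and y₀ ≥₂ G(y₀,x₀), then there exists (x,y) with F(x,y) = x and G(y,x) = y. -/

import Mathlib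

theorem stmt_3 {X Y : Type*} [MetricSpace X] [MetricSpace Y]
    [CompleteSpace X] [CompleteSpace Y] [PartialOrder X] [PartialOrder Y]
    (F : X → Y → X) (G : Y → X → Y)
    (hFc : Continuous fun p : X × Y => F p.1 p.2)
    (hGc : Continuous fun p : Y × X => G p.1 p.2)
    (hFmono : ∀ y : Y, Monotone fun x => F x y)
    (hFanti : ∀ x : X, Antitone fun y => F x y)
    (hGanti : ∀ y : Y, Antitone fun x => G y x)
    (hGmono : ∀ x : X, Monotone fun y => G y x)
    (k l : ℝ) (hk0 : 0 ≤ k) (hl0 : 0 ≤ l) (hkl : k + l < 1)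
    (hF : ∀ x u : X, ∀ y v : Y, u ≤ x → y ≤ v →
      dist (F x y) (F u v) ≤ k * dist x u + l * dist y v)
    (hG : ∀ x u : X, ∀ y v : Y, x ≤ u → v ≤ y →
      dist (G y x) (G v u) ≤ k * dist y v + l * dist x u)
    (x₀ : X) (y₀ : Y) (hx₀ : x₀ ≤ F x₀ y₀) (hy₀ : G y₀ x₀ ≤ y₀) :
    ∃ (x : X) (y : Y), F x y = x ∧ G y x = y := by
  -- the iteration sequence
  let p : ℕ → X × Y := fun n => Nat.rec (x₀, y₀) (fun _ q => (F q.1 q.2, G q.2 q.1)) n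
  let xs : ℕ → X := fun n => (p n).1
  let ys : ℕ → Y := fun n => (p n).2
  have hsx : ∀ n, xs (n + 1) = F (xs n) (ys n) := fun n => rfl
  have hsy : ∀ n, ys (n + 1) = G (ys n) (xs n) := fun n => rfl
  have hx0 : xs 0 = x₀ := rfl
  have hy0 : ys 0 = y₀ := rfl
  -- adjacent monotonicity
  have hmono : ∀ n, xs n ≤ xs (n + 1) ∧ ys (n + 1) ≤ ys n := by
    intro n
    induction n with
    | zero => exact ⟨hx₀, hy₀⟩
    | succ n ih =>
      constructor
      · rw [hsx (n + 1), hsx n]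
        exact le_trans (hFmono (ys n) ih.1) (hFanti (xs (n + 1)) ih.2)
      · rw [hsy (n + 1), hsy n]
        exact le_trans (hGmono (xs (n + 1)) ih.2) (hGanti (ys n) ih.1)
  set r : ℝ := k + l with hrdef
  have hr0 : 0 ≤ r := by positivity
  set D : ℝ := dist (xs 0) (xs 1) + dist (ys 0) (ys 1) with hDdef
  have hD0 : 0 ≤ D := by positivity
  -- contraction estimate
  have hd : ∀ n, dist (xs n) (xs (n + 1)) + dist (ys n) (ys (n + 1)) ≤ D * r ^ n := by
    intro n
    induction n with
    | zero => simp only [pow_zero, mul_one]; exact le_of_eq hDdef.symm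
    | succ n ih =>
      have h1 : dist (xs (n + 1)) (xs (n + 2)) ≤
          k * dist (xs n) (xs (n + 1)) + l * dist (ys n) (ys (n + 1)) := by
        rw [hsx n, hsx (n + 1), dist_comm]
        calc dist (F (xs (n + 1)) (ys (n + 1))) (F (xs n) (ys n))
            ≤ k * dist (xs (n + 1)) (xs n) + l * dist (ys (n + 1)) (ys n) :=
              hF _ _ _ _ (hmono n).1 (hmono n).2
          _ = k * dist (xs n) (xs (n + 1)) + l * dist (ys n) (ys (n + 1)) := by
              rw [dist_comm (xs (n + 1)), dist_comm (ys (n + 1))]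
      have h2 : dist (ys (n + 1)) (ys (n + 2)) ≤
          k * dist (ys n) (ys (n + 1)) + l * dist (xs n) (xs (n + 1)) := by
        rw [hsy n, hsy (n + 1)]
        exact hG _ _ _ _ (hmono n).1 (hmono n).2
      calc dist (xs (n + 1)) (xs (n + 2)) + dist (ys (n + 1)) (ys (n + 2))
          ≤ (k * dist (xs n) (xs (n + 1)) + l * dist (ys n) (ys (n + 1))) +
            (k * dist (ys n) (ys (n + 1)) + l * dist (xs n) (xs (n + 1))) :=
            add_le_add h1 h2
        _ = r * (dist (xs n) (xs (n + 1)) + dist (ys n) (ys (n + 1))) := by ring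
        _ ≤ r * (D * r ^ n) := by
            exact mul_le_mul_of_nonneg_left ih hr0
        _ = D * r ^ (n + 1) := by ring
  have hr1 : r < 1 := hkl
  have hcx : CauchySeq xs :=
    cauchySeq_of_le_geometric r D hr1 fun n =>
      le_trans (le_add_of_nonneg_right dist_nonneg) (hd n)
  have hcy : CauchySeq ys :=
    cauchySeq_of_le_geometric r D hr1 fun n =>
      le_trans (le_add_of_nonneg_left dist_nonneg) (hd n)
  obtain ⟨x, hxlim⟩ := cauchySeq_tendsto_of_complete hcx
  obtain ⟨y, hylim⟩ := cauchySeq_tendsto_of_complete hcy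
  refine ⟨x, y, ?_, ?_⟩
  · have h1 : Filter.Tendsto (fun n => F (xs n) (ys n)) Filter.atTop (nhds (F x y)) :=
      (hFc.tendsto (x, y)).comp (hxlim.prodMk_nhds hylim)
    have h2 : Filter.Tendsto (fun n => F (xs n) (ys n)) Filter.atTop (nhds x) := by
      have := hxlim.comp (Filter.tendsto_add_atTop_nat 1)
      exact Filter.Tendsto.congr (fun n => hsx n) this
    exact tendsto_nhds_unique h1 h2
  · have h1 : Filter.Tendsto (fun n => G (ys n) (xs n)) Filter.atTop (nhds (G y x)) :=
      (hGc.tendsto (y, x)).comp (hylim.prodMk_nhds hxlim)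
    have h2 : Filter.Tendsto (fun n => G (ys n) (xs n)) Filter.atTop (nhds y) := by
      have := hylim.comp (Filter.tendsto_add_atTop_nat 1)
      exact Filter.Tendsto.congr (fun n => hsy n) this
    exact tendsto_nhds_unique h1 h2
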